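/- Let v1 be a primitive word, v2 a nonempty proper prefix of v1, and e1, e2 integers with 1 ≤ e2 ≤ e1. Then U = v1^{e1} v2 v1^{e2} is primitive. -/

import Mathlib

variable {α : Type*}

/-- `x` occurs in `w` beginning at (1-indexed) position `i`. -/
def OccursAt (x w : List α) (i : ℕ) : Prop :=
  ∃ u v : List α, w = u ++ x ++ v ∧ u.length + 1 = i

/-- The last (rightmost) occurrence of `x` in `w` begins at position `i`. -/
def LastOccAt (x w : List α) (i : ℕ) : Prop :=
  OccursAt x w i ∧ ∀ j, OccursAt x w j → j ≤ i

/-- `e`-fold concatenation of the word `v`. -/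
def listPow (v : List α) (e : ℕ) : List α :=
  (List.replicate e v).flatten

/-- A word is primitive if it is nonempty and not a nontrivial power. -/
def Primitive (w : List α) : Prop :=
  w ≠ [] ∧ ∀ (v : List α) (e : ℕ), 2 ≤ e → w ≠ listPow v e

/-- The set of distinct squares occurring in `w`. -/
def squareSet (w : List α) : Set (List α) :=
  {x | ∃ u : List α, u ≠ [] ∧ x = u ++ u ∧ x <:+: w}

/-- The number of distinct squares whose last occurrence in `w` begins at position `i`. -/
noncomputable def sCount (w : List α) (i : ℕ) : ℕ :=
  {u : List α | u ≠ [] ∧ LastOccAt (u ++ u) w i}.ncard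

lemma listPow_zero (v : List α) : listPow v 0 = [] := rfl

lemma listPow_succ (v : List α) (n : ℕ) : listPow v (n+1) = v ++ listPow v n := by
  simp [listPow, List.replicate_succ]

lemma listPow_one (v : List α) : listPow v 1 = v := by simp [listPow]

lemma listPow_nil (n : ℕ) : listPow ([] : List α) n = [] := by
  induction n with
  | zero => rfl
  | succ n ih => rw [listPow_succ, ih]; rfl

lemma listPow_add (v : List α) (a b : ℕ) :
    listPow v (a + b) = listPow v a ++ listPow v b := by
  induction a with
  | zero => simp [listPow_zero]
  | succ a ih => rw [Nat.succ_add, listPow_succ, listPow_succ, ih, List.append_assoc]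

lemma length_listPow (v : List α) (n : ℕ) : (listPow v n).length = n * v.length := by
  induction n with
  | zero => simp [listPow_zero]
  | succ n ih => rw [listPow_succ, List.length_append, ih, Nat.succ_mul]; ring

lemma listPow_mul (v : List α) (a b : ℕ) :
    listPow (listPow v a) b = listPow v (a * b) := by
  induction b with
  | zero => simp [listPow_zero]
  | succ b ih => rw [listPow_succ, ih, ← listPow_add]; congr 1; ring

lemma listPow_shift (x y : List α) (e : ℕ) :
    x ++ listPow (y ++ x) e = listPow (x ++ y) e ++ x := by
  induction e with
  | zero => simp [listPow_zero]
  | succ e ih =>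
    rw [listPow_succ, listPow_succ]
    calc x ++ ((y ++ x) ++ listPow (y ++ x) e)
        = (x ++ y) ++ (x ++ listPow (y ++ x) e) := by simp [List.append_assoc]
      _ = (x ++ y) ++ (listPow (x ++ y) e ++ x) := by rw [ih]
      _ = ((x ++ y) ++ listPow (x ++ y) e) ++ x := by simp [List.append_assoc]

lemma rot_listPow : ∀ (x y z : List α) (e : ℕ), x ++ y = listPow z e →
    ∃ z', y ++ x = listPow z' e := by
  intro x
  induction x with
  | nil => exact fun y z e h => ⟨z, by simpa using h⟩
  | cons c x' ih =>
    intro y z e h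
    match e with
    | 0 => simp [listPow_zero] at h
    | e+1 =>
      cases z with
      | nil => rw [listPow_nil] at h; simp at h
      | cons d t =>
        have h0 := h
        rw [listPow_succ] at h
        have h' : c = d ∧ x' ++ y = t ++ listPow (d :: t) (e+1-1) := by
          simpa using h
        obtain ⟨rfl, htail⟩ := h'
        have key : [c] ++ listPow (t ++ [c]) (e+1) = listPow ([c] ++ t) (e+1) ++ [c] :=
          listPow_shift [c] t (e+1)
        have key2 : listPow (t ++ [c]) (e+1) = x' ++ (y ++ [c]) := by
          have h2 : listPow ([c] ++ t) (e+1) ++ [c] = [c] ++ (x' ++ (y ++ [c])) := by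
            have : listPow ([c] ++ t) (e+1) = (c :: x') ++ y := by
              simpa using h0.symm
            rw [this]; simp
          have := key.trans h2
          exact List.append_cancel_left this
        obtain ⟨z', hz'⟩ := ih (y ++ [c]) (t ++ [c]) (e+1) key2.symm
        exact ⟨z', by simpa using hz'⟩

lemma prefix_of_prefix_length_le {l1 l2 l3 : List α} (h1 : l1 <+: l3) (h2 : l2 <+: l3)
    (h : l1.length ≤ l2.length) : l1 <+: l2 := by
  have e1 := List.prefix_iff_eq_take.1 h1
  have e2 := List.prefix_iff_eq_take.1 h2
  rw [List.prefix_iff_eq_take]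
  rw [e2, List.take_take, min_eq_left h, ← e1]

lemma comm_aux : ∀ (n : ℕ) (x y : List α), x.length + y.length ≤ n →
    x.length ≤ y.length → x ++ y = y ++ x →
    ∃ w i j, x = listPow w i ∧ y = listPow w j := by
  intro n
  induction n with
  | zero =>
    intro x y hn _ _
    have hx : x = [] := List.length_eq_zero_iff.1 (by omega)
    have hy : y = [] := List.length_eq_zero_iff.1 (by omega)
    exact ⟨[], 0, 0, by simp [hx, listPow_zero], by simp [hy, listPow_zero]⟩
  | succ n ih =>
    intro x y hn hle h
    by_cases hx : x = []
    · exact ⟨y, 0, 1, by simp [hx, listPow_zero], by simp [listPow_one]⟩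
    · have hxy : x <+: y :=
        prefix_of_prefix_length_le (List.prefix_append x y) (h ▸ List.prefix_append y x) hle
      obtain ⟨y', rfl⟩ := hxy
      have h' : x ++ y' = y' ++ x := by
        have : x ++ (x ++ y') = x ++ (y' ++ x) := by
          simpa [List.append_assoc] using h
        exact List.append_cancel_left this
      have hxpos : 0 < x.length := List.length_pos_iff.2 hx
      have hlen : x.length + y'.length ≤ n := by
        have := hn
        simp [List.length_append] at this
        omega
      have hres : ∃ w i j, x = listPow w i ∧ y' = listPow w j := by
        rcases le_total x.length y'.length with hc | hc
        · exact ih x y' hlen hc h'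
        · obtain ⟨w, i, j, h1, h2⟩ := ih y' x (by omega) hc h'.symm
          exact ⟨w, j, i, h2, h1⟩
      obtain ⟨w, i, j, rfl, rfl⟩ := hres
      exact ⟨w, i, i + j, rfl, (listPow_add w i j).symm⟩

lemma comm_append {x y : List α} (h : x ++ y = y ++ x) :
    ∃ w i j, x = listPow w i ∧ y = listPow w j := by
  rcases le_total x.length y.length with hc | hc
  · exact comm_aux (x.length + y.length) x y le_rfl hc h
  · obtain ⟨w, i, j, h1, h2⟩ := comm_aux (y.length + x.length) y x le_rfl hc h.symm
    exact ⟨w, j, i, h2, h1⟩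

lemma primitive_no_rot {v x y : List α} (hv : Primitive v) (h1 : v = x ++ y)
    (h2 : v = y ++ x) (hx : x ≠ []) (hy : y ≠ []) : False := by
  obtain ⟨w, i, j, hxw, hyw⟩ := comm_append (h1.symm.trans h2)
  have hi : 1 ≤ i := by
    rcases Nat.eq_zero_or_pos i with rfl | h
    · exact absurd hxw (by simp [listPow_zero, hx])
    · omega
  have hj : 1 ≤ j := by
    rcases Nat.eq_zero_or_pos j with rfl | h
    · exact absurd hyw (by simp [listPow_zero, hy])
    · omega
  exact hv.2 w (i + j) (by omega) (by rw [h1, hxw, hyw, listPow_add])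

lemma sync {v : List α} (hv : Primitive v) :
    ∀ (n : ℕ) (A B : List α), listPow v n = A ++ v ++ B → v.length ∣ A.length := by
  intro n
  induction n with
  | zero =>
    intro A B h
    rw [listPow_zero] at h
    have := h.symm
    simp only [List.append_assoc, List.append_eq_nil_iff] at this
    exact absurd this.2.1 hv.1
  | succ n ih =>
    intro A B h
    rw [listPow_succ] at h
    rcases le_or_gt v.length A.length with hle | hlt
    · have hA : A <+: v ++ listPow v n := by
        rw [h]; exact ⟨v ++ B, by simp [List.append_assoc]⟩
      have hvA : v <+: A := prefix_of_prefix_length_le (List.prefix_append v _) hA hle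
      obtain ⟨A', rfl⟩ := hvA
      have h' : listPow v n = A' ++ v ++ B := by
        have : v ++ listPow v n = v ++ (A' ++ v ++ B) := by
          simpa [List.append_assoc] using h
        exact List.append_cancel_left this
      have := ih A' B h'
      rw [List.length_append]
      exact dvd_add (dvd_refl _) this
    · -- A shorter than v
      have hA : A <+: v ++ listPow v n := by
        rw [h]; exact ⟨v ++ B, by simp [List.append_assoc]⟩
      have hAv : A <+: v := prefix_of_prefix_length_le hA (List.prefix_append v _) hlt.le
      obtain ⟨A₂, hA₂⟩ := hAv
      by_cases hA0 : A = []
      · simp [hA0]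
      · exfalso
        have hA₂0 : A₂ ≠ [] := by
          rintro rfl
          rw [List.append_nil] at hA₂
          rw [hA₂] at hlt
          omega
        have hcancel : A₂ ++ listPow v n = v ++ B := by
          have : A ++ (A₂ ++ listPow v n) = A ++ (v ++ B) := by
            rw [← List.append_assoc, hA₂]
            simpa [List.append_assoc] using h
          exact List.append_cancel_left this
        match n with
        | 0 =>
          rw [listPow_zero, List.append_nil] at hcancel
          have hl := congrArg List.length hcancel
          have hl2 := congrArg List.length hA₂
          simp [List.length_append] at hl hl2
          have := List.length_pos_iff.2 hA0
          omega
        | n+1 =>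
          rw [listPow_succ] at hcancel
          -- take v.length of both sides
          have hlenA₂ : A₂.length ≤ v.length := by
            have := congrArg List.length hA₂
            simp [List.length_append] at this
            omega
          have htake := congrArg (List.take v.length) hcancel
          rw [List.take_append, List.take_of_length_le hlenA₂,
            List.take_left] at htake
          rw [List.take_append_of_le_length (by omega)] at htake
          have hlenrel : v.length - A₂.length = A.length := by
            have := congrArg List.length hA₂
            simp [List.length_append] at this
            omega
          rw [hlenrel, ← List.prefix_iff_eq_take.1 ⟨A₂, hA₂⟩] at htake
          -- htake : A₂ ++ A = v
          exact primitive_no_rot hv hA₂.symm htake.symm hA0 hA₂0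

lemma epr_aux : ∀ (N : ℕ) (w : List α), w.length ≤ N → w ≠ [] →
    ∃ r n, Primitive r ∧ 1 ≤ n ∧ w = listPow r n := by
  intro N
  induction N with
  | zero =>
    intro w h hw
    exact absurd (List.length_eq_zero_iff.1 (by omega)) hw
  | succ N ih =>
    intro w hlen hw
    by_cases hp : ∀ v e, 2 ≤ e → w ≠ listPow v e
    · exact ⟨w, 1, ⟨hw, hp⟩, le_refl 1, (listPow_one w).symm⟩
    · push_neg at hp
      obtain ⟨v, e, he, hwe⟩ := hp
      have hv : v ≠ [] := by
        rintro rfl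
        rw [listPow_nil] at hwe
        exact hw hwe
      have hvpos : 0 < v.length := List.length_pos_iff.2 hv
      have hlw : w.length = e * v.length := by rw [hwe, length_listPow]
      have hvlen : v.length < w.length := by
        have h2 : 2 * v.length ≤ e * v.length := Nat.mul_le_mul_right _ he
        omega
      obtain ⟨r, n, hr, hn1, hvr⟩ := ih v (by omega) hv
      refine ⟨r, n * e, hr, ?_, ?_⟩
      · have h1 : 1 * 1 ≤ n * e := Nat.mul_le_mul hn1 (by omega)
        omega
      · rw [hwe, hvr, listPow_mul]

lemma exists_primitive_root (w : List α) (hw : w ≠ []) :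
    ∃ r n, Primitive r ∧ 1 ≤ n ∧ w = listPow r n :=
  epr_aux w.length w le_rfl hw

lemma take_listPow (v : List α) : ∀ (n i : ℕ), i ≤ n * v.length →
    (listPow v n).take i = listPow v (i / v.length) ++ v.take (i % v.length) := by
  by_cases hv : v = []
  · intro n i h
    subst hv
    simp at h
    simp [h, listPow_nil]
  · have hp : 0 < v.length := List.length_pos_iff.2 hv
    intro n
    induction n with
    | zero =>
      intro i h
      simp at h
      simp [h, listPow_zero]
    | succ n ih =>
      intro i h
      rw [listPow_succ]
      rcases lt_or_ge i v.length with hlt | hle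
      · rw [List.take_append_of_le_length hlt.le, Nat.div_eq_of_lt hlt,
          Nat.mod_eq_of_lt hlt, listPow_zero, List.nil_append]
      · obtain ⟨j, rfl⟩ : ∃ j, i = j + v.length := ⟨i - v.length, by omega⟩
        rw [List.take_append, List.take_of_length_le (by omega)]
        have hj : j ≤ n * v.length := by
          have := h
          rw [Nat.succ_mul] at this
          omega
        have harith : j + v.length - v.length = j := by omega
        rw [harith, ih j hj, Nat.add_div_right j hp, Nat.add_mod_right j _]
        rw [listPow_succ]
        simp [List.append_assoc]

lemma main_aux {v1 v2 z : List α} {m e : ℕ} (hprim : Primitive v1) (hne : v2 ≠ [])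
    (hpre : v2 <+: v1) (hqp : v2.length < v1.length) (hm : 2 ≤ m) (he : 2 ≤ e)
    (hzprim : Primitive z) (hW : listPow v1 m ++ v2 = listPow z e) : False := by
  have hv1 : v1 ≠ [] := hprim.1
  have hp : 0 < v1.length := List.length_pos_iff.2 hv1
  have hq : 0 < v2.length := List.length_pos_iff.2 hne
  have hz : z ≠ [] := hzprim.1
  have hL : 0 < z.length := List.length_pos_iff.2 hz
  have hlen : m * v1.length + v2.length = e * z.length := by
    have := congrArg List.length hW
    simpa [List.length_append, length_listPow] using this
  have h2L : 2 * z.length ≤ e * z.length := Nat.mul_le_mul_right _ he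
  have h2p : 2 * v1.length ≤ m * v1.length := Nat.mul_le_mul_right _ hm
  have hLmp : z.length < m * v1.length := by omega
  -- z as prefix of v1^m
  have hzW : z = (listPow v1 m ++ v2).take z.length := by
    have he2' : e = (e - 1) + 1 := by omega
    rw [hW, he2', listPow_succ]
    exact (List.take_left (l₁ := z)).symm
  obtain ⟨k, hk⟩ : ∃ k, z.length / v1.length = k := ⟨_, rfl⟩
  obtain ⟨b, hbdef⟩ : ∃ b, z.length % v1.length = b := ⟨_, rfl⟩
  have hbp : b < v1.length := hbdef ▸ Nat.mod_lt _ hp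
  have hkb : v1.length * k + b = z.length := by
    rw [← hk, ← hbdef]; exact Nat.div_add_mod z.length v1.length
  have hzv : z = listPow v1 k ++ v1.take b := by
    conv_lhs => rw [hzW]
    rw [List.take_append_of_le_length (by rw [length_listPow]; omega), ← hk, ← hbdef]
    exact take_listPow v1 m z.length (by rw [← length_listPow v1 m] at hLmp; omega)
  rcases Nat.eq_zero_or_pos k with hk0 | hk1
  · -- case k = 0 : z is a short prefix of v1
    subst hk0
    have hbL : b = z.length := by omega
    have hLp : z.length < v1.length := by omega
    have hz' : z = v1.take b := by
      conv_lhs => rw [hzv]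
      rw [listPow_zero, List.nil_append]
    have hprez : z <+: v1 := by rw [hz']; exact List.take_prefix _ _
    have hprev1 : v1 <+: listPow v1 (m - 1) ++ v2 := by
      have hm' : m - 1 = (m - 2) + 1 := by omega
      rw [hm', listPow_succ, List.append_assoc]
      exact List.prefix_append _ _
    obtain ⟨B, hB⟩ := hprez.trans hprev1
    have hocc : listPow z e = v1 ++ z ++ B := by
      rw [← hW]
      have hm' : m = (m - 1) + 1 := by omega
      rw [hm', listPow_succ, List.append_assoc, ← hB]
      simp [List.append_assoc]
    have hdvd : z.length ∣ v1.length := sync hzprim e v1 B hocc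
    have hd2 : 2 ≤ v1.length / z.length := by
      obtain ⟨c, hc⟩ := hdvd
      have hcd : v1.length / z.length = c := by
        rw [hc, Nat.mul_div_cancel_left c hL]
      match c with
      | 0 => omega
      | 1 => omega
      | c + 2 => omega
    have hv1z : v1 = listPow z (v1.length / z.length) := by
      have h1 : v1 = (listPow z e).take v1.length := by
        rw [← hW]
        have hm' : m = (m - 1) + 1 := by omega
        rw [hm', listPow_succ, List.append_assoc]
        exact (List.take_left (l₁ := v1)).symm
      conv_lhs => rw [h1]
      rw [take_listPow z e v1.length (by omega), Nat.mod_eq_zero_of_dvd hdvd]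
      simp
    exact hprim.2 z _ hd2 hv1z
  · -- case k ≥ 1
    obtain ⟨v2', hv2'⟩ := hpre
    have he2' : e = (e - 2) + 1 + 1 := by omega
    have hzsplit : z = v1 ++ (listPow v1 (k - 1) ++ v1.take b) := by
      have hk' : k = (k - 1) + 1 := by omega
      conv_lhs => rw [hzv, hk']
      rw [listPow_succ, List.append_assoc]
    have hbig : listPow v1 (m + 1) = z ++ v1 ++
        ((listPow v1 (k - 1) ++ v1.take b) ++ (listPow z (e - 2) ++ v2')) := by
      calc listPow v1 (m + 1) = listPow v1 m ++ v1 := by rw [listPow_add, listPow_one]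
        _ = (listPow v1 m ++ v2) ++ v2' := by rw [List.append_assoc, hv2']
        _ = listPow z e ++ v2' := by rw [hW]
        _ = z ++ (z ++ (listPow z (e - 2) ++ v2')) := by
            rw [he2', listPow_succ, listPow_succ]
            simp [List.append_assoc]
        _ = _ := by
            conv_rhs => rw [List.append_assoc]
            congr 1
            nth_rewrite 1 [hzsplit]
            simp [List.append_assoc]
    have hdvd : v1.length ∣ z.length := by
      have := sync hprim (m + 1) z _ hbig
      exact this
    have hb0 : b = 0 := by rw [← hbdef]; exact Nat.mod_eq_zero_of_dvd hdvd
    have hzk : z = listPow v1 k := by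
      rw [hzv, hb0]
      simp
    have hW2 : listPow v1 m ++ v2 = listPow v1 (k * e) := by
      rw [hW, hzk, listPow_mul]
    have hlen2 : m * v1.length + v2.length = k * e * v1.length := by
      have := congrArg List.length hW2
      simpa [List.length_append, length_listPow] using this
    have hpd : v1.length ∣ v2.length := by
      have h1 : v1.length ∣ m * v1.length := dvd_mul_left _ _
      have h2 : v1.length ∣ k * e * v1.length := dvd_mul_left _ _
      rw [← hlen2] at h2
      exact (Nat.dvd_add_right h1).1 h2
    have := Nat.eq_zero_of_dvd_of_lt hpd hqp
    omega

/-- If v₁ is primitive and v₂ a nonempty proper prefix of v₁, then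
    U = v₁^{e₁} v₂ v₁^{e₂} is primitive. -/
theorem stmt2 {α : Type*} (v1 v2 : List α) (e1 e2 : ℕ)
    (hprim : Primitive v1) (hne : v2 ≠ []) (hpre : v2 <+: v1) (hproper : v2 ≠ v1)
    (he2 : 1 ≤ e2) (he12 : e2 ≤ e1) :
    Primitive (listPow v1 e1 ++ v2 ++ listPow v1 e2) := by
  have hv1 : v1 ≠ [] := hprim.1
  have hqp : v2.length < v1.length := by
    rcases lt_or_eq_of_le hpre.length_le with h | h
    · exact h
    · exact absurd (List.IsPrefix.eq_of_length hpre h) hproper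
  constructor
  · intro h
    apply hne
    have := congrArg List.length h
    simp only [List.length_append, length_listPow, List.length_nil] at this
    exact List.length_eq_zero_iff.1 (by omega)
  · intro z0 e0 he0 hU
    obtain ⟨z1, hz1⟩ := rot_listPow (listPow v1 e1 ++ v2) (listPow v1 e2) z0 e0 hU
    have hW : listPow v1 (e2 + e1) ++ v2 = listPow z1 e0 := by
      rw [listPow_add, List.append_assoc]
      exact hz1
    have hz1ne : z1 ≠ [] := by
      rintro rfl
      rw [listPow_nil] at hW
      simp at hW
      exact hne hW.2
    obtain ⟨z, n, hzprim, hn1, rfl⟩ := exists_primitive_root z1 hz1ne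
    rw [listPow_mul] at hW
    have hne2 : 2 ≤ n * e0 := by
      have h1 : 1 * 2 ≤ n * e0 := Nat.mul_le_mul hn1 he0
      omega
    refine main_aux hprim hne hpre hqp ?_ hne2 hzprim hW
    omega
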